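/- Let d ≥ 2 be an integer and suppose r_1, …, r_{d−1} are positive real numbers such that M_d(t) = Π_{i=1}^{d−1} (t² + r_i) for all real t. Then Σ_{i=1}^{d−1} 2/(r_i + 1) = d − 1. -/

import Mathlib

open Finset MeasureTheory

/-- `M d t = ∑_{k=0}^{d-1} C(d-1,k)² t^{2k}`. -/
noncomputable def M (d : ℕ) (t : ℝ) : ℝ :=
  ∑ k ∈ Finset.range d, ((d - 1).choose k : ℝ) ^ 2 * t ^ (2 * k)

/-- `A d t = ∑_{k=1}^{d-1} k² C(d-1,k)² t^{2(k-1)}`. -/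
noncomputable def A (d : ℕ) (t : ℝ) : ℝ :=
  ∑ k ∈ Finset.Icc 1 (d - 1), (k : ℝ) ^ 2 * ((d - 1).choose k : ℝ) ^ 2 * t ^ (2 * (k - 1))

/-- `B d t = ∑_{k=1}^{d-1} k C(d-1,k)² t^{2k-1}`. -/
noncomputable def B (d : ℕ) (t : ℝ) : ℝ :=
  ∑ k ∈ Finset.Icc 1 (d - 1), (k : ℝ) * ((d - 1).choose k : ℝ) ^ 2 * t ^ (2 * k - 1)

/-- The density `f d t = (1/π)·√(A_d(t)·M_d(t) − B_d(t)²) / M_d(t)`. -/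
noncomputable def f (d : ℕ) (t : ℝ) : ℝ :=
  (1 / Real.pi) * Real.sqrt (A d t * M d t - (B d t) ^ 2) / M d t

/-- The coefficients `a_k`. -/
noncomputable def a (d k : ℕ) : ℝ :=
  (∑ i ∈ Finset.range d, ∑ j ∈ Finset.range (d - 1),
      if i + j = k then ((d - 1).choose i : ℝ) ^ 2 * ((d - 2).choose j : ℝ) ^ 2 else 0)
  - (∑ i ∈ Finset.range (d - 1), ∑ j ∈ Finset.range (d - 1),
      if i + j + 1 = k then
        ((d - 2).choose i : ℝ) * ((d - 1).choose (i + 1) : ℝ) *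
          ((d - 2).choose j : ℝ) * ((d - 1).choose (j + 1) : ℝ)
      else 0)

lemma key_sum (n : ℕ) :
    ∑ k ∈ Finset.range (n + 1), (n.choose k : ℝ) ^ 2 * (2 * k) =
      n * ∑ k ∈ Finset.range (n + 1), (n.choose k : ℝ) ^ 2 := by
  have hrefl := Finset.sum_range_reflect
    (fun k => (k : ℝ) * (n.choose k : ℝ) ^ 2) (n + 1)
  simp only [add_tsub_cancel_right] at hrefl
  have h1 : ∑ k ∈ Finset.range (n + 1), ((n - k : ℕ) : ℝ) * (n.choose (n - k) : ℝ) ^ 2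
      = ∑ k ∈ Finset.range (n + 1), (k : ℝ) * (n.choose k : ℝ) ^ 2 := hrefl
  have h2 : ∀ k ∈ Finset.range (n + 1), ((n - k : ℕ) : ℝ) * (n.choose (n - k) : ℝ) ^ 2
      = ((n : ℝ) - k) * (n.choose k : ℝ) ^ 2 := by
    intro k hk
    rw [Finset.mem_range, Nat.lt_succ_iff] at hk
    rw [Nat.choose_symm hk, Nat.cast_sub hk]
  rw [Finset.sum_congr rfl h2] at h1
  have h3 : ∑ k ∈ Finset.range (n + 1), ((n : ℝ) - k) * (n.choose k : ℝ) ^ 2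
      = n * ∑ k ∈ Finset.range (n + 1), (n.choose k : ℝ) ^ 2
        - ∑ k ∈ Finset.range (n + 1), (k : ℝ) * (n.choose k : ℝ) ^ 2 := by
    rw [Finset.mul_sum, ← Finset.sum_sub_distrib]
    exact Finset.sum_congr rfl fun k _ => by ring
  rw [h3] at h1
  have : ∑ k ∈ Finset.range (n + 1), (n.choose k : ℝ) ^ 2 * (2 * k)
      = 2 * ∑ k ∈ Finset.range (n + 1), (k : ℝ) * (n.choose k : ℝ) ^ 2 := by
    rw [Finset.mul_sum]; exact Finset.sum_congr rfl fun k _ => by ring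
  rw [this]; linarith

theorem stmt_16 (d : ℕ) (hd : 2 ≤ d) (r : Fin (d - 1) → ℝ) (hr : ∀ i, 0 < r i)
    (hM : ∀ t : ℝ, M d t = ∏ i, (t ^ 2 + r i)) :
    ∑ i, 2 / (r i + 1) = (d : ℝ) - 1 := by
  have hd1 : d = (d - 1) + 1 := by omega
  have hpos : ∀ i, (0:ℝ) < 1 + r i := fun i => by have := hr i; linarith
  -- derivative of M at 1 (polynomial form)
  have hderM : HasDerivAt (M d)
      (∑ k ∈ Finset.range d, ((d-1).choose k : ℝ) ^ 2 * (2 * k)) 1 := by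
    have h : HasDerivAt (M d)
        (∑ k ∈ Finset.range d, ((d-1).choose k : ℝ) ^ 2 * (((2*k : ℕ) : ℝ) * (1:ℝ) ^ (2*k - 1))) 1 := by
      apply HasDerivAt.fun_sum
      intro k _
      exact ((hasDerivAt_pow (2*k) (1:ℝ)).const_mul _)
    have e : ∀ k ∈ Finset.range d, ((d-1).choose k : ℝ) ^ 2 * (((2*k : ℕ) : ℝ) * (1:ℝ) ^ (2*k - 1))
        = ((d-1).choose k : ℝ) ^ 2 * (2 * k) := by
      intro k _; push_cast; ring
    rwa [Finset.sum_congr rfl e] at h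
  -- derivative of the product at 1
  have hderP : HasDerivAt (fun t : ℝ => ∏ i, (t ^ 2 + r i))
      (∑ i, (∏ j ∈ Finset.univ.erase i, ((1:ℝ) + r j)) * 2) 1 := by
    have h := HasDerivAt.fun_finsetProd (u := (Finset.univ : Finset (Fin (d-1))))
      (f := fun i (t:ℝ) => t ^ 2 + r i) (f' := fun _ => (2:ℝ)) (x := 1)
      (fun i _ => by simpa using (hasDerivAt_pow 2 (1:ℝ)).add_const (r i))
    simpa [smul_eq_mul, one_pow, add_comm] using h
  have hMP : M d = fun t : ℝ => ∏ i, (t ^ 2 + r i) := funext hM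
  rw [hMP] at hderM
  have heq := hderM.unique hderP
  -- value at 1
  have hval : ∑ k ∈ Finset.range d, ((d-1).choose k : ℝ) ^ 2 = ∏ i, ((1:ℝ) + r i) := by
    have := hM 1
    simpa [M, add_comm] using this
  have hPpos : (0:ℝ) < ∏ i, ((1:ℝ) + r i) := Finset.prod_pos fun i _ => hpos i
  have hkey : ∑ k ∈ Finset.range d, ((d-1).choose k : ℝ) ^ 2 * (2 * k)
      = (d - 1 : ℕ) * ∏ i, ((1:ℝ) + r i) := by
    rw [← hval]
    rw [hd1]
    simp only [Nat.add_sub_cancel]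
    exact key_sum (d - 1)
  have hterm : ∀ i : Fin (d-1), 2 / (r i + 1)
      = (∏ j ∈ Finset.univ.erase i, ((1:ℝ) + r j)) * 2 / ∏ i, ((1:ℝ) + r i) := by
    intro i
    have hPi : ∏ j, ((1:ℝ) + r j) = (1 + r i) * ∏ j ∈ Finset.univ.erase i, ((1:ℝ) + r j) :=
      (Finset.mul_prod_erase _ _ (Finset.mem_univ i)).symm
    have hne : (∏ j ∈ Finset.univ.erase i, ((1:ℝ) + r j)) ≠ 0 :=
      ne_of_gt (Finset.prod_pos fun j _ => hpos j)
    have hne2 : (1 : ℝ) + r i ≠ 0 := ne_of_gt (hpos i)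
    rw [hPi, mul_comm (1 + r i), mul_div_mul_left _ _ hne, add_comm]
  calc ∑ i, 2 / (r i + 1)
      = ∑ i, (∏ j ∈ Finset.univ.erase i, ((1:ℝ) + r j)) * 2 / ∏ i, ((1:ℝ) + r i) :=
        Finset.sum_congr rfl fun i _ => hterm i
    _ = (∑ i, (∏ j ∈ Finset.univ.erase i, ((1:ℝ) + r j)) * 2) / ∏ i, ((1:ℝ) + r i) := by
        rw [Finset.sum_div]
    _ = ((d - 1 : ℕ) * ∏ i, ((1:ℝ) + r i)) / ∏ i, ((1:ℝ) + r i) := by rw [← heq, hkey]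
    _ = (d - 1 : ℕ) := by field_simp
    _ = (d:ℝ) - 1 := by
        have : (1:ℕ) ≤ d := by omega
        push_cast [this]; ring
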